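/- For every integer k ≥ 3 there exists a finite simple graph G together with two adjacent vertices x and y of G such that: (a) G admits a 2-coloring with no monochromatic cycle of length k; and (b) every 2-coloring c of G with no monochromatic cycle of length k satisfies c x ≠ c y. -/

import Mathlib

/-- `c` is a 2-coloring of `G` with no monochromatic cycle of length `k`. -/
def NoMonoCycle {V : Type*} (G : SimpleGraph V) (k : ℕ) (c : V → Bool) : Prop :=
  ∀ ⦃v : V⦄ (w : G.Walk v v), w.IsCycle → w.length = k →
    ¬ (∀ u ∈ w.support, c u = c v)

namespace Gadget

open SimpleGraph List

variable {V : Type} {G : SimpleGraph V}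

/-- Build a walk from a chain of adjacencies. -/
def walkOfChain (G : SimpleGraph V) : (a : V) → (l : List V) → List.Chain G.Adj a l →
    G.Walk a (l.getLastD a)
  | _, [], _ => SimpleGraph.Walk.nil
  | a, b :: l, h =>
    (SimpleGraph.Walk.cons (List.chain_cons.mp h).1
      (walkOfChain G b l (List.chain_cons.mp h).2)).copy rfl (List.getLastD_cons (a := a) (b := b) (l := l)).symm

@[simp] lemma walkOfChain_support (a : V) (l : List V) (h : List.Chain G.Adj a l) :
    (walkOfChain G a l h).support = a :: l := by
  induction l generalizing a with
  | nil => simp [walkOfChain]; rfl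
  | cons b l ih => simp [walkOfChain, ih]; exact ih _ _

@[simp] lemma walkOfChain_length (a : V) (l : List V) (h : List.Chain G.Adj a l) :
    (walkOfChain G a l h).length = l.length := by
  induction l generalizing a with
  | nil => simp [walkOfChain]; rfl
  | cons b l ih => simp [walkOfChain, ih]; exact ih _ _

lemma getLastD_mem_cons : ∀ (l : List V) (a : V), l.getLastD a ∈ a :: l
  | [], a => by simp
  | b :: l, a => by
    rw [List.getLastD_cons]
    exact List.mem_cons_of_mem _ (getLastD_mem_cons l b)

lemma getLastD_mem {l : List V} (h : l ≠ []) (d : V) : l.getLastD d ∈ l := by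
  cases l with
  | nil => exact absurd rfl h
  | cons b t =>
    rw [List.getLastD_cons]
    exact getLastD_mem_cons t b

lemma edge_end_start_not_mem {a z : V} (p : G.Walk a z) (hp : p.support.Nodup)
    (hlen : 2 ≤ p.length) : s(z, a) ∉ p.edges := by
  cases p with
  | nil => simp
  | @cons _ b _ h q =>
    intro hmem
    rw [SimpleGraph.Walk.edges_cons, List.mem_cons] at hmem
    rw [SimpleGraph.Walk.support_cons, List.nodup_cons] at hp
    rcases hmem with heq | hmem
    · rw [Sym2.eq_iff] at heq
      rcases heq with ⟨hz, hab⟩ | ⟨hz, _⟩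
      · exact h.ne hab
      · -- z = b, so q : Walk b z with b = z: q has nodup support and is closed
        subst hz
        have : q.IsPath := SimpleGraph.Walk.IsPath.mk' hp.2
        have : q = SimpleGraph.Walk.nil := SimpleGraph.Walk.isPath_iff_eq_nil.mp this
        subst this
        simp at hlen
    · exact hp.1 (SimpleGraph.Walk.snd_mem_support_of_mem_edges q hmem)

/-- From a cyclic list of ≥3 distinct pairwise-chained vertices, all colored `b`,
contradiction with NoMonoCycle. -/
lemma no_cycle_of_list {k : ℕ} {c : V → Bool} (hno : NoMonoCycle G k c)
    (a : V) (t : List V) (hchain : List.Chain G.Adj a t)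
    (hwrap : G.Adj (t.getLastD a) a) (hnd : (a :: t).Nodup)
    (hlen : t.length + 1 = k) (hk : 3 ≤ k) (b : Bool)
    (hcol : ∀ v ∈ a :: t, c v = b) : False := by
  set z := t.getLastD a with hz
  have hzmem : z ∈ a :: t := getLastD_mem_cons t a
  let p : G.Walk a z := walkOfChain G a t hchain
  have hps : p.support = a :: t := walkOfChain_support a t hchain
  have hpl : p.length = t.length := walkOfChain_length a t hchain
  let w : G.Walk z z := SimpleGraph.Walk.cons hwrap p
  have hcyc : w.IsCycle := by
    rw [SimpleGraph.Walk.cons_isCycle_iff]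
    constructor
    · exact SimpleGraph.Walk.IsPath.mk' (by rw [hps]; exact hnd)
    · exact edge_end_start_not_mem p (by rw [hps]; exact hnd) (by omega)
  have hwl : w.length = k := by
    simp only [w, SimpleGraph.Walk.length_cons, hpl]; omega
  refine hno w hcyc hwl ?_
  intro u hu
  rw [SimpleGraph.Walk.support_cons, hps] at hu
  have hcz : c z = b := hcol z hzmem
  rcases List.mem_cons.mp hu with rfl | hu
  · rw [hcz]
  · rw [hcol u hu, hcz]



/-- Universal clique (part 0) joined to two disjoint cliques (parts 1 and 2). -/
def G4 (m : ℕ) : SimpleGraph (Fin 3 × Fin m) where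
  Adj p q := p ≠ q ∧ (p.1 = 0 ∨ q.1 = 0 ∨ p.1 = q.1)
  symm := by
    constructor
    rintro p q ⟨h1, h2⟩
    exact ⟨h1.symm, by tauto⟩
  loopless := by constructor; rintro p ⟨h1, _⟩; exact h1 rfl

lemma G4_adj {m : ℕ} {p q : Fin 3 × Fin m} :
    (G4 m).Adj p q ↔ p ≠ q ∧ (p.1 = 0 ∨ q.1 = 0 ∨ p.1 = q.1) := Iff.rfl

/-- Walks avoiding part 0 stay in one part. -/
lemma walk_confined {m : ℕ} {a z : Fin 3 × Fin m} (p : (G4 m).Walk a z)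
    (h : ∀ u ∈ p.support, u.1 ≠ 0) : ∀ u ∈ p.support, u.1 = a.1 := by
  induction p with
  | nil => simp
  | @cons a b z hadj q ih =>
    intro u hu
    have hab : a.1 = b.1 := by
      have ha : a.1 ≠ 0 := h a (by simp)
      have hb : b.1 ≠ 0 := h b (by simp [SimpleGraph.Walk.support_cons])
      rcases hadj.2 with h' | h' | h' <;> tauto
    rw [SimpleGraph.Walk.support_cons, List.mem_cons] at hu
    rcases hu with rfl | hu
    · rfl
    · rw [ih (fun v hv => h v (by simp [SimpleGraph.Walk.support_cons, hv])) u hu, hab]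

/-- The valid coloring: part 0 gets `true`, parts 1, 2 get `false`. -/
lemma valid_coloring {m : ℕ} (hm : 3 ≤ m) :
    NoMonoCycle (G4 m) (m + 1) (fun p => decide (p.1 = 0)) := by
  intro v w hcyc hlen hmono
  have htail : w.support.tail.Nodup := hcyc.support_nodup
  have htl : w.support.tail.length = m + 1 := by
    have := w.length_support
    rw [List.length_tail, this, hlen]
    omega
  -- All support vertices have the same first coordinate class as v
  by_cases hv : v.1 = 0
  · -- all support vertices are in part 0
    have hall : ∀ u ∈ w.support, u.1 = (0 : Fin 3) := by
      intro u hu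
      have := hmono u hu
      simp [hv] at this
      exact this
    have hnd2 : (w.support.tail.map Prod.snd).Nodup := by
      refine List.Nodup.map_on ?_ htail
      intro x hx y hy hxy
      have hx0 := hall x (List.mem_of_mem_tail hx)
      have hy0 := hall y (List.mem_of_mem_tail hy)
      exact Prod.ext (hx0.trans hy0.symm) hxy
    have := hnd2.length_le_card
    simp [htl] at this
    omega
  · have hvf : decide (v.1 = 0) = false := by simp [hv]
    have hall : ∀ u ∈ w.support, u.1 ≠ (0 : Fin 3) := by
      intro u hu
      have := hmono u hu
      simp only at this
      rw [hvf] at this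
      simpa using this
    have hconf := walk_confined w hall
    have hnd2 : (w.support.tail.map Prod.snd).Nodup := by
      refine List.Nodup.map_on ?_ htail
      intro x hx y hy hxy
      have hx0 := hconf x (List.mem_of_mem_tail hx)
      have hy0 := hconf y (List.mem_of_mem_tail hy)
      exact Prod.ext (hx0.trans hy0.symm) hxy
    have := hnd2.length_le_card
    simp [htl] at this
    omega



lemma mem_map_part {m : ℕ} {i : Fin 3} {l : List (Fin m)} {x : Fin 3 × Fin m}
    (hx : x ∈ l.map (fun a => (i, a))) : x.1 = i ∧ x.2 ∈ l := by
  rcases List.mem_map.mp hx with ⟨a, ha, rfl⟩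
  exact ⟨rfl, ha⟩

lemma nodup_map_part {m : ℕ} {i : Fin 3} {l : List (Fin m)} (h : l.Nodup) :
    (l.map (fun a => (i, a))).Nodup :=
  h.map (fun a b hab => by simpa using congrArg Prod.snd hab)

lemma chain'_map_part {m : ℕ} {i : Fin 3} {l : List (Fin m)} (h : l.Nodup) :
    List.Chain' (G4 m).Adj (l.map (fun a => (i, a))) := by
  refine List.Pairwise.isChain ?_
  rw [List.pairwise_map]
  refine h.imp ?_
  intro a b hab
  exact ⟨by simp [Prod.ext_iff, hab], Or.inr (Or.inr rfl)⟩

/-- Master lemma: builds a monochromatic (m+1)-cycle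
`(0,u1) :: laM ++ luM ++ lbM` and derives a contradiction. -/
lemma master {m : ℕ} (hm : 3 ≤ m) {c : Fin 3 × Fin m → Bool}
    (hno : NoMonoCycle (G4 m) (m + 1) c) (b : Bool)
    (iA iB : Fin 3) (hiA : iA ≠ 0) (hiB : iB ≠ 0) (hAB : iA ≠ iB)
    (la lb lu : List (Fin m)) (u1 : Fin m)
    (hla : la.Nodup) (hlb : lb.Nodup) (hlu : (u1 :: lu).Nodup)
    (hca : ∀ a ∈ la, c (iA, a) = b) (hcb : ∀ a ∈ lb, c (iB, a) = b)
    (hcu : ∀ a ∈ u1 :: lu, c (0, a) = b)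
    (hlen : la.length + lb.length + lu.length + 1 = m + 1)
    (hw : la ≠ [] → lb ≠ [] → lu ≠ []) : False := by
  classical
  set laM : List (Fin 3 × Fin m) := la.map (fun a => (iA, a)) with hlaM
  set lbM : List (Fin 3 × Fin m) := lb.map (fun a => (iB, a)) with hlbM
  set luM : List (Fin 3 × Fin m) := lu.map (fun a => ((0 : Fin 3), a)) with hluM
  set a0 : Fin 3 × Fin m := (0, u1) with ha0
  set M : List (Fin 3 × Fin m) := laM ++ (luM ++ lbM) with hM
  have hMmem : ∀ x ∈ M, (x.1 = iA ∧ x.2 ∈ la) ∨ (x.1 = 0 ∧ x.2 ∈ lu) ∨ (x.1 = iB ∧ x.2 ∈ lb) := by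
    intro x hx
    rw [hM, List.mem_append, List.mem_append] at hx
    rcases hx with h | h | h
    · exact Or.inl (mem_map_part h)
    · exact Or.inr (Or.inl (mem_map_part h))
    · exact Or.inr (Or.inr (mem_map_part h))
  -- universal adjacency
  have hadj_univ : ∀ x : Fin 3 × Fin m, x ≠ a0 → (G4 m).Adj a0 x := by
    intro x hx
    exact ⟨fun h => hx h.symm, Or.inl rfl⟩
  have ha0M : a0 ∉ M := by
    intro h
    rcases hMmem a0 h with ⟨h1, _⟩ | ⟨_, h2⟩ | ⟨h1, _⟩
    · exact hiA (by rw [← h1])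
    · exact (List.nodup_cons.mp hlu).1 h2
    · exact hiB (by rw [← h1])
  -- Chain
  have hchain : List.Chain (G4 m).Adj a0 M := by
    have hchain' : List.Chain' (G4 m).Adj M := by
      rw [hM]
      refine List.IsChain.append ?_ (List.IsChain.append ?_ ?_ ?_) ?_
      · exact chain'_map_part hla
      · exact chain'_map_part ((List.nodup_cons.mp hlu).2)
      · exact chain'_map_part hlb
      · -- junction luM → lbM
        intro x hx y hy
        have hx' : x ∈ luM := List.mem_of_mem_getLast? hx
        have hy' : y ∈ lbM := List.mem_of_mem_head? hy
        have h1 := mem_map_part (l := lu) hx'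
        have h2 := mem_map_part (l := lb) hy'
        refine ⟨?_, Or.inl h1.1⟩
        intro hxy
        rw [hxy] at h1
        rw [h1.1] at h2
        exact hiB h2.1.symm
      · -- junction laM → (luM ++ lbM)
        intro x hx y hy
        have hx' : x ∈ laM := List.mem_of_mem_getLast? hx
        have hy' : y ∈ luM ++ lbM := List.mem_of_mem_head? hy
        have h1 := mem_map_part (l := la) hx'
        have hy2 : y.1 = 0 ∨ y.1 = iB := by
          rcases List.mem_append.mp hy' with h | h
          · exact Or.inl (mem_map_part h).1
          · exact Or.inr (mem_map_part h).1
        have hne : x ≠ y := by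
          intro hxy
          rw [← hxy] at hy2
          rcases hy2 with h | h
          · exact hiA (h1.1 ▸ h)
          · exact hAB (h1.1 ▸ h ▸ rfl)
        rcases hy2 with h | h
        · exact ⟨hne, Or.inr (Or.inl h)⟩
        · -- y in lbM; need lu nonempty contradiction handling
          -- x ∈ laM so la ≠ [], y ∈ lbM so lb ≠ [], hence lu ≠ [],
          -- but then head? of luM ++ lbM would be in luM. Contradiction.
          exfalso
          have hlane : la ≠ [] := by
            intro h'
            rw [h'] at h1
            exact List.not_mem_nil h1.2
          have hlbne : lb ≠ [] := by
            intro h'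
            have hyu : y ∈ luM := by
              rcases List.mem_append.mp hy' with hh | hh
              · exact hh
              · rw [hlbM, h'] at hh; simp at hh
            have h0 := (mem_map_part (l := lu) hyu).1
            rw [h] at h0
            exact hiB h0
          have hlune := hw hlane hlbne
          have : luM ≠ [] := by
            intro h'
            rw [hluM] at h'
            exact hlune (List.map_eq_nil_iff.mp h')
          rw [List.head?_append_of_ne_nil] at hy
          · have hy'' : y ∈ luM := List.mem_of_mem_head? hy
            have := (mem_map_part (l := lu) hy'').1
            rw [h] at this
            exact hiB this
          · exact this
    -- now extend to Chain a0 M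
    rcases hMhead : M with _ | ⟨y, M'⟩
    · exact List.Chain.nil
    · refine List.Chain.cons ?_ ?_
      · refine hadj_univ y ?_
        intro h
        rw [← h] at ha0M
        rw [hMhead] at ha0M
        exact ha0M List.mem_cons_self
      · rw [hMhead] at hchain'
        exact hchain'
  -- wrap edge
  have hMne : M ≠ [] := by
    intro h
    have : M.length = 0 := by rw [h]; rfl
    rw [hM] at this
    simp only [List.length_append, List.length_map, hlaM, hlbM, hluM] at this
    omega
  have hwrap : (G4 m).Adj (M.getLastD a0) a0 := by
    have hmem : M.getLastD a0 ∈ M := getLastD_mem hMne a0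
    have hne : M.getLastD a0 ≠ a0 := fun h => ha0M (h ▸ hmem)
    exact ((G4 m).adj_symm (hadj_univ _ hne))
  -- nodup
  have hnd : (a0 :: M).Nodup := by
    rw [List.nodup_cons]
    refine ⟨ha0M, ?_⟩
    rw [hM]
    rw [List.nodup_append', List.nodup_append']
    refine ⟨nodup_map_part hla, ⟨nodup_map_part (List.nodup_cons.mp hlu).2, nodup_map_part hlb, ?_⟩, ?_⟩
    · intro x hx hx2
      have h1 := (mem_map_part (l := lu) hx).1
      have h2 := (mem_map_part (l := lb) hx2).1
      rw [h1] at h2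
      exact hiB h2.symm
    · intro x hx hx2
      have h1 := (mem_map_part (l := la) hx).1
      have h2 : x.1 = 0 ∨ x.1 = iB := by
        rcases List.mem_append.mp hx2 with h | h
        · exact Or.inl (mem_map_part h).1
        · exact Or.inr (mem_map_part h).1
      rcases h2 with h | h
      · exact hiA (h1 ▸ h)
      · exact hAB (h1 ▸ h ▸ rfl)
  -- length
  have hlenM : M.length + 1 = m + 1 := by
    rw [hM]
    simp only [List.length_append, List.length_map, hlaM, hlbM, hluM]
    omega
  -- colors
  have hcol : ∀ v ∈ a0 :: M, c v = b := by
    intro v hv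
    rcases List.mem_cons.mp hv with rfl | hv
    · exact hcu u1 List.mem_cons_self
    · rcases hMmem v hv with ⟨h1, h2⟩ | ⟨h1, h2⟩ | ⟨h1, h2⟩
      · have : v = (iA, v.2) := Prod.ext h1 rfl
        rw [this]; exact hca v.2 h2
      · have : v = ((0 : Fin 3), v.2) := Prod.ext h1 rfl
        rw [this]; exact hcu v.2 (List.mem_cons_of_mem _ h2)
      · have : v = (iB, v.2) := Prod.ext h1 rfl
        rw [this]; exact hcb v.2 h2
  exact no_cycle_of_list hno a0 M hchain hwrap hnd hlenM (by omega) b hcol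


theorem forcing {m : ℕ} (hm : 3 ≤ m) (c : Fin 3 × Fin m → Bool)
    (hno : NoMonoCycle (G4 m) (m + 1) c) (u0 v0 : Fin m) :
    c ((0 : Fin 3), u0) ≠ c ((1 : Fin 3), v0) := by
  classical
  intro heq
  set b := c ((0 : Fin 3), u0) with hb
  set S : Fin 3 → Bool → Finset (Fin m) :=
    fun i bo => Finset.univ.filter (fun a => c (i, a) = bo) with hS
  have hmem : ∀ (i : Fin 3) (bo : Bool) (a : Fin m), a ∈ S i bo ↔ c (i, a) = bo := by
    intro i bo a; simp [hS]
  have hcardS : ∀ (i : Fin 3) (bo : Bool), (S i bo).card + (S i (!bo)).card = m := by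
    intro i bo
    have h1 : S i (!bo) = Finset.univ.filter (fun a => ¬ (c (i, a) = bo)) := by
      apply Finset.filter_congr
      intro a _
      cases hca : c (i, a) <;> cases bo <;> simp
    rw [h1, hS]
    rw [Finset.card_filter_add_card_filter_not]
    simp
  have hextract : ∀ (i : Fin 3) (bo : Bool) (p : ℕ), p ≤ (S i bo).card →
      ∃ l : List (Fin m), l.Nodup ∧ l.length = p ∧ ∀ a ∈ l, c (i, a) = bo := by
    intro i bo p hp
    obtain ⟨t, hts, hcardt⟩ := Finset.exists_subset_card_eq hp
    exact ⟨t.toList, t.nodup_toList, by simp [hcardt],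
      fun a ha => (hmem i bo a).mp (hts (Finset.mem_toList.mp ha))⟩
  set j := (S 0 b).card with hj
  set al := (S 1 b).card with hal
  set be := (S 2 b).card with hbe
  have hjm : j ≤ m := by have := hcardS 0 b; omega
  have halm : al ≤ m := by have := hcardS 1 b; omega
  have hbem : be ≤ m := by have := hcardS 2 b; omega
  have hj1 : 1 ≤ j := by
    refine Finset.card_pos.mpr ⟨u0, ?_⟩
    rw [hmem]
  have hal1 : 1 ≤ al := by
    refine Finset.card_pos.mpr ⟨v0, ?_⟩
    rw [hmem]
    exact heq.symm
  have h0b : (S 0 (!b)).card = m - j := by have := hcardS 0 b; omega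
  have h1b : (S 1 (!b)).card = m - al := by have := hcardS 1 b; omega
  have h2b : (S 2 (!b)).card = m - be := by have := hcardS 2 b; omega
  -- helper to get a nonempty universal list
  have hune : ∀ (bo : Bool) (p : ℕ), 1 ≤ p → p ≤ (S 0 bo).card →
      ∃ (u1 : Fin m) (lu : List (Fin m)), (u1 :: lu).Nodup ∧ lu.length = p - 1 ∧
        ∀ a ∈ u1 :: lu, c ((0 : Fin 3), a) = bo := by
    intro bo p hp1 hp
    obtain ⟨l, hnd, hlenl, hcol⟩ := hextract 0 bo p hp
    obtain ⟨u1, lu, rfl⟩ : ∃ u1 lu, l = u1 :: lu := by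
      cases l with
      | nil => simp at hlenl; omega
      | cons a t => exact ⟨a, t, rfl⟩
    exact ⟨u1, lu, hnd, by simp at hlenl; omega, hcol⟩
  by_cases hA : al = m
  · -- clique 1 fully colored b : cycle = clique 1 + one universal
    obtain ⟨la, hland, hlal, hlac⟩ := hextract 1 b m (le_of_eq hA.symm)
    obtain ⟨u1, lu, hlund, hlul, hluc⟩ := hune b 1 le_rfl hj1
    refine master hm hno b 1 2 (by decide) (by decide) (by decide) la [] lu u1
      hland (by simp) hlund hlac (by simp) hluc (by simp only [List.length_nil]; omega) ?_
    intro _ h; exact absurd rfl h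
  by_cases hB : be = m
  · obtain ⟨la, hland, hlal, hlac⟩ := hextract 2 b m (le_of_eq hB.symm)
    obtain ⟨u1, lu, hlund, hlul, hluc⟩ := hune b 1 le_rfl hj1
    refine master hm hno b 2 1 (by decide) (by decide) (by decide) la [] lu u1
      hland (by simp) hlund hlac (by simp) hluc (by simp only [List.length_nil]; omega) ?_
    intro _ h; exact absurd rfl h
  by_cases hJ : j = m
  · -- all universals colored b: cycle = y + all universals
    obtain ⟨u1, lu, hlund, hlul, hluc⟩ := hune b m (by omega) (le_of_eq hJ.symm)
    refine master hm hno b 1 2 (by decide) (by decide) (by decide)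
      [v0] [] lu u1 (by simp) (by simp) hlund
      (by intro a ha; simp at ha; subst ha; exact heq.symm) (by simp) hluc
      (by simp only [List.length_singleton, List.length_nil]; omega) ?_
    intro _ h; exact absurd rfl h
  by_cases hJ1 : j = 1
  · -- T4 : use the complement color
    obtain ⟨la, hland, hlal, hlac⟩ := hextract 1 (!b) 1 (by omega)
    obtain ⟨lb, hlbnd, hlbl, hlbc⟩ := hextract 2 (!b) 1 (by omega)
    obtain ⟨u1, lu, hlund, hlul, hluc⟩ := hune (!b) (m - 1) (by omega) (by omega)
    exact master hm hno (!b) 1 2 (by decide) (by decide) (by decide) la lb lu u1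
      hland hlbnd hlund hlac hlbc hluc (by omega)
      (fun _ _ => by rw [← List.length_pos_iff]; omega)
  -- now 2 ≤ j ≤ m - 1
  by_cases hAB2 : m + 1 - j ≤ al + be
  · -- T2 : b-side cycle with all b-universals
    obtain ⟨la, hland, hlal, hlac⟩ := hextract 1 b (min al (m + 1 - j)) (by omega)
    obtain ⟨lb, hlbnd, hlbl, hlbc⟩ := hextract 2 b (m + 1 - j - min al (m + 1 - j)) (by omega)
    obtain ⟨u1, lu, hlund, hlul, hluc⟩ := hune b j (by omega) le_rfl
    exact master hm hno b 1 2 (by decide) (by decide) (by decide) la lb lu u1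
      hland hlbnd hlund hlac hlbc hluc (by omega)
      (fun _ _ => by rw [← List.length_pos_iff]; omega)
  by_cases hJ2 : j = m - 1
  · -- T5a : al = 1, be = 0, clique 2 fully !b + the single !b universal
    obtain ⟨la, hland, hlal, hlac⟩ := hextract 2 (!b) m (by omega)
    obtain ⟨u1, lu, hlund, hlul, hluc⟩ := hune (!b) 1 le_rfl (by omega)
    refine master hm hno (!b) 2 1 (by decide) (by decide) (by decide) la [] lu u1
      hland (by simp) hlund hlac (by simp) hluc (by simp only [List.length_nil]; omega) ?_
    intro _ h; exact absurd rfl h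
  · -- T5b : complement side with all !b-universals
    obtain ⟨la, hland, hlal, hlac⟩ := hextract 1 (!b) (min (m - al) (j + 1)) (by omega)
    obtain ⟨lb, hlbnd, hlbl, hlbc⟩ := hextract 2 (!b) (j + 1 - min (m - al) (j + 1)) (by omega)
    obtain ⟨u1, lu, hlund, hlul, hluc⟩ := hune (!b) (m - j) (by omega) (by omega)
    exact master hm hno (!b) 1 2 (by decide) (by decide) (by decide) la lb lu u1
      hland hlbnd hlund hlac hlbc hluc (by omega)
      (fun _ _ => by rw [← List.length_pos_iff]; omega)

/-! ### The case k = 3 : two universal vertices joined to a 5-cycle -/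

abbrev V3 := ZMod 5 ⊕ Fin 2

def rel3 (p q : V3) : Bool :=
  match p, q with
  | .inl a, .inl b => decide (a = b + 1) || decide (b = a + 1)
  | _, _ => true

def G3 : SimpleGraph V3 where
  Adj p q := p ≠ q ∧ rel3 p q = true
  symm := by
    constructor
    intro p q h
    exact ⟨h.1.symm, by revert h; revert p q; decide⟩
  loopless := by
    constructor
    intro p h
    exact h.1 rfl

instance : DecidableRel G3.Adj :=
  fun p q => inferInstanceAs (Decidable (p ≠ q ∧ rel3 p q = true))

def c3 : V3 → Bool := Sum.elim (fun _ => false) (fun _ => true)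

lemma valid3 : NoMonoCycle G3 3 c3 := by
  intro v w hcyc hlen hmono
  have key : ∀ p q r : V3, G3.Adj p q → G3.Adj q r → G3.Adj r p →
      ¬(c3 q = c3 p ∧ c3 r = c3 p) := by decide
  have h01 : G3.Adj (w.getVert 0) (w.getVert 1) := w.adj_getVert_succ (by omega)
  have h12 : G3.Adj (w.getVert 1) (w.getVert 2) := w.adj_getVert_succ (by omega)
  have h23 : G3.Adj (w.getVert 2) (w.getVert 3) := w.adj_getVert_succ (by omega)
  rw [w.getVert_zero] at h01
  have h3 : w.getVert 3 = v := by rw [← hlen]; exact w.getVert_length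
  rw [h3] at h23
  have hm1 : w.getVert 1 ∈ w.support :=
    SimpleGraph.Walk.mem_support_iff_exists_getVert.mpr ⟨1, rfl, by omega⟩
  have hm2 : w.getVert 2 ∈ w.support :=
    SimpleGraph.Walk.mem_support_iff_exists_getVert.mpr ⟨2, rfl, by omega⟩
  exact key v (w.getVert 1) (w.getVert 2) h01 h12 h23 ⟨hmono _ hm1, hmono _ hm2⟩

lemma forcing3 (c : V3 → Bool) (hno : NoMonoCycle G3 3 c) :
    c (Sum.inr 0) ≠ c (Sum.inl 0) := by
  intro heq
  set b := c (Sum.inr 0) with hb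
  by_cases h2 : c (Sum.inr 1) = b
  · -- triangle (inl 0, inr 0, inr 1)
    refine no_cycle_of_list hno (Sum.inl 0) [Sum.inr 0, Sum.inr 1] ?_ ?_ ?_ rfl le_rfl b ?_
    · exact List.Chain.cons (by decide) (List.Chain.cons (by decide) List.Chain.nil)
    · decide
    · decide
    · intro u hu
      fin_cases hu
      · exact heq.symm
      · rfl
      · exact h2
  · have h2' : c (Sum.inr 1) = !b := by
      cases hcb : c (Sum.inr 1) <;> cases hbb : b <;> simp_all
    have hpair : ∀ f : ZMod 5 → Bool, ∃ i : ZMod 5, f i = f (i + 1) := by decide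
    obtain ⟨i, hi⟩ := hpair (fun a => c (Sum.inl a))
    set b' := c (Sum.inl i) with hb'
    have hu : ∃ u : Fin 2, c (Sum.inr u) = b' := by
      by_cases hbb : b' = b
      · exact ⟨0, by rw [← hb, hbb]⟩
      · refine ⟨1, ?_⟩
        rw [h2']
        cases hb1 : b' <;> cases hb2 : b <;> simp_all
    obtain ⟨u, hcu⟩ := hu
    refine no_cycle_of_list hno (Sum.inl i) [Sum.inl (i + 1), Sum.inr u] ?_ ?_ ?_ rfl le_rfl b' ?_
    · refine List.Chain.cons ⟨?_, ?_⟩ (List.Chain.cons ⟨?_, ?_⟩ List.Chain.nil)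
      · intro h
        exact (by decide : ∀ a : ZMod 5, a ≠ a + 1) i (Sum.inl_injective h)
      · show rel3 _ _ = true
        simp [rel3]
      · simp
      · rfl
    · show G3.Adj (Sum.inr u) (Sum.inl i)
      exact ⟨by simp, rfl⟩
    · refine List.nodup_cons.mpr ⟨?_, List.nodup_cons.mpr ⟨by simp, List.nodup_singleton _⟩⟩
      simp only [List.mem_cons, List.not_mem_nil, or_false]
      push_neg
      constructor
      · intro h
        exact (by decide : ∀ a : ZMod 5, a ≠ a + 1) i (Sum.inl_injective h)
      · simp
    · intro v hv
      fin_cases hv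
      · rfl
      · exact hi.symm
      · exact hcu

/-! ### Assembly -/

theorem stmt12' (k : ℕ) (hk : 3 ≤ k) :
    ∃ (V : Type) (_ : Fintype V) (G : SimpleGraph V) (x y : V),
      G.Adj x y ∧
      (∃ c : V → Bool, NoMonoCycle G k c) ∧
      (∀ c : V → Bool, NoMonoCycle G k c → c x ≠ c y) := by
  by_cases hk4 : 4 ≤ k
  · obtain ⟨m, rfl⟩ : ∃ m, k = m + 1 := ⟨k - 1, by omega⟩
    have hm : 3 ≤ m := by omega
    have hm0 : 0 < m := by omega
    refine ⟨Fin 3 × Fin m, inferInstance, G4 m, ((0 : Fin 3), ⟨0, hm0⟩),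
      ((1 : Fin 3), ⟨0, hm0⟩), ?_, ⟨_, valid_coloring hm⟩, ?_⟩
    · exact ⟨by simp [Prod.ext_iff], Or.inl rfl⟩
    · intro c hno
      exact forcing hm c hno ⟨0, hm0⟩ ⟨0, hm0⟩
  · have hk3 : k = 3 := by omega
    subst hk3
    exact ⟨V3, inferInstance, G3, Sum.inr 0, Sum.inl 0, ⟨by simp, rfl⟩,
      ⟨c3, valid3⟩, fun c hno => forcing3 c hno⟩

end Gadget


theorem stmt12 (k : ℕ) (hk : 3 ≤ k) :
    ∃ (V : Type) (_ : Fintype V) (G : SimpleGraph V) (x y : V),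
      G.Adj x y ∧
      (∃ c : V → Bool, NoMonoCycle G k c) ∧
      (∀ c : V → Bool, NoMonoCycle G k c → c x ≠ c y) := by
  exact Gadget.stmt12' k hk
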